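/- Let p be a nonzero prime ideal of O_K with absolute norm N(p) = q, and let i₀ ≥ 1 be an integer. Let P be a subset of L_{i₀}^n (the Cartesian product of n copies of L_{i₀} = τ(p^{i₀})), and let C be a q-ary (n, M, d_C)-code over the alphabet set S_{i₀-1} that contains the zero codeword. Then the minimum Euclidean distance of the packing τ(C) + P in ℝ^{mn} satisfies d_E(τ(C)+P) ≥ min{ d_E(L_{i₀-1})·√d_C , d_E(P) }. -/

import Mathlib

open scoped BigOperators
open MeasureTheory

noncomputable section

/-- The index set for `ℝ^{s+2t}`: `s` real coordinates and `t` pairs of coordinates. -/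
abbrev PackIdx (s t : ℕ) := Fin s ⊕ Fin t × Fin 2

/-- The canonical embedding `τ : K → ℝ^{s+2t}`,
`τ(α) = (ρ₁(α),…,ρ_s(α), √2·Re σ₁(α), √2·Im σ₁(α), …, √2·Re σ_t(α), √2·Im σ_t(α))`. -/
def tauEmb {K : Type*} [Field K] {s t : ℕ}
    (ρ : Fin s → (K →+* ℝ)) (σ : Fin t → (K →+* ℂ)) (α : K) :
    EuclideanSpace ℝ (PackIdx s t) :=
  (EuclideanSpace.equiv (PackIdx s t) ℝ).symm <|
    Sum.elim (fun i => ρ i α)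
      (fun p => if p.2 = (0 : Fin 2) then Real.sqrt 2 * (σ p.1 α).re
                else Real.sqrt 2 * (σ p.1 α).im)

/-- The system of `s + 2t` field embeddings `K → ℂ` determined by the data `ρ, σ`:
the real embeddings `ρᵢ` and the complex embeddings `σⱼ` together with their conjugates. -/
def embSystem {K : Type*} [Field K] {s t : ℕ}
    (ρ : Fin s → (K →+* ℝ)) (σ : Fin t → (K →+* ℂ)) : PackIdx s t → (K →+* ℂ) :=
  Sum.elim (fun i => Complex.ofRealHom.comp (ρ i))
    (fun p => if p.2 = (0 : Fin 2) then σ p.1 else (starRingEnd ℂ).comp (σ p.1))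

/-- `ρ, σ` list exactly the real embeddings and the pairs of complex-conjugate embeddings
of `K`, without repetition: the associated system of `s+2t` embeddings `K → ℂ` is a
bijective enumeration of all field embeddings `K → ℂ`. -/
def IsEmbSystem {K : Type*} [Field K] {s t : ℕ}
    (ρ : Fin s → (K →+* ℝ)) (σ : Fin t → (K →+* ℂ)) : Prop :=
  Function.Bijective (embSystem ρ σ)

/-- The minimum (infimal) Euclidean distance between two distinct points of `P`. -/
def minDist {E : Type*} [MetricSpace E] (P : Set E) : ℝ :=
  sInf {d : ℝ | ∃ x ∈ P, ∃ y ∈ P, x ≠ y ∧ dist x y = d}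

/-- The volume `V_N` of the unit ball in `ℝ^N` (with index set `ι`, `N = |ι|`). -/
def unitBallVol (ι : Type*) [Fintype ι] : ℝ :=
  (volume (Metric.ball (0 : EuclideanSpace ℝ ι) 1)).toReal

/-- The packing density
`Δ(P) = limsup_{R→∞} |P ∩ B(R)| · r^N · V_N / vol(B(R+r))`, where `r = d_E(P)/2`. -/
def packDensity {ι : Type*} [Fintype ι] (P : Set (EuclideanSpace ℝ ι)) : ℝ :=
  Filter.limsup (fun R : ℝ =>
    (Nat.card (P ∩ Metric.closedBall 0 R : Set (EuclideanSpace ℝ ι)) : ℝ) *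
      (minDist P / 2) ^ (Fintype.card ι) * unitBallVol ι /
      (volume (Metric.closedBall (0 : EuclideanSpace ℝ ι) (R + minDist P / 2))).toReal)
    Filter.atTop

/-- `L_I = τ(I)`, the image in `ℝ^{s+2t}` of an ideal `I` of the ring of integers under the
canonical embedding. -/
def idealImage {K : Type*} [Field K] [NumberField K] {s t : ℕ}
    (ρ : Fin s → (K →+* ℝ)) (σ : Fin t → (K →+* ℂ))
    (I : Ideal (NumberField.RingOfIntegers K)) : Set (EuclideanSpace ℝ (PackIdx s t)) :=
  (fun a : NumberField.RingOfIntegers K =>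
    tauEmb ρ σ (algebraMap (NumberField.RingOfIntegers K) K a)) '' (I : Set _)

/-- The coordinatewise extension `τ : K^n → ℝ^{mn}`. -/
def tauEmbN {K : Type*} [Field K] {s t : ℕ} {n : ℕ}
    (ρ : Fin s → (K →+* ℝ)) (σ : Fin t → (K →+* ℂ)) (c : Fin n → K) :
    EuclideanSpace ℝ (Fin n × PackIdx s t) :=
  (EuclideanSpace.equiv (Fin n × PackIdx s t) ℝ).symm fun p => tauEmb ρ σ (c p.1) p.2

/-- The Cartesian product `L^n ⊆ ℝ^{mn}` of `n` copies of `L ⊆ ℝ^m`. -/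
def prodSet {ι : Type*} (n : ℕ) (L : Set (EuclideanSpace ℝ ι)) :
    Set (EuclideanSpace ℝ (Fin n × ι)) :=
  {x | ∀ j : Fin n,
    ((EuclideanSpace.equiv ι ℝ).symm fun i => (EuclideanSpace.equiv (Fin n × ι) ℝ) x (j, i)) ∈ L}

/-- `S` is a valid alphabet set at level `i`: a set of `q` elements of `p^i` containing `0`
whose residues modulo `p^{i+1}` represent the `q` distinct elements of `p^i/p^{i+1}`. -/
def IsRepSet {K : Type*} [Field K] [NumberField K]
    (p : Ideal (NumberField.RingOfIntegers K)) (i q : ℕ)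
    (S : Set (NumberField.RingOfIntegers K)) : Prop :=
  S ⊆ (p ^ i : Ideal (NumberField.RingOfIntegers K)) ∧ (0 : NumberField.RingOfIntegers K) ∈ S ∧
    Nat.card S = q ∧
    (∀ x ∈ S, ∀ y ∈ S, x ≠ y → x - y ∉ (p ^ (i + 1) : Ideal (NumberField.RingOfIntegers K))) ∧
    (∀ z ∈ (p ^ i : Ideal (NumberField.RingOfIntegers K)), ∃ a ∈ S,
      z - a ∈ (p ^ (i + 1) : Ideal (NumberField.RingOfIntegers K)))

/-- Hamming distance between two words. -/
def hDist {n : ℕ} {A : Type*} (u v : Fin n → A) : ℕ := Nat.card {j : Fin n // u j ≠ v j}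

/-- The minimum Hamming distance of a code `C`. -/
def codeMinDist {n : ℕ} {A : Type*} (C : Set (Fin n → A)) : ℕ :=
  sInf {d : ℕ | ∃ u ∈ C, ∃ v ∈ C, u ≠ v ∧ hDist u v = d}

/-- `C` is an `(n, M, d)`-code over the alphabet set `S`. -/
def IsCode {A : Type*} {n : ℕ} (S : Set A) (M d : ℕ) (C : Set (Fin n → A)) : Prop :=
  (∀ c ∈ C, ∀ j, c j ∈ S) ∧ Nat.card C = M ∧ codeMinDist C = d

/-- The translate `τ(c) + P` of `P` by the embedded codeword `c`. -/
def wordTranslate {K : Type*} [Field K] [NumberField K] {s t n : ℕ}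
    (ρ : Fin s → (K →+* ℝ)) (σ : Fin t → (K →+* ℂ))
    (c : Fin n → NumberField.RingOfIntegers K)
    (P : Set (EuclideanSpace ℝ (Fin n × PackIdx s t))) :
    Set (EuclideanSpace ℝ (Fin n × PackIdx s t)) :=
  {z | ∃ x ∈ P, z = tauEmbN ρ σ (fun j => algebraMap (NumberField.RingOfIntegers K) K (c j)) + x}

/-- The concatenation `τ(C) + P = { τ(c) + p : c ∈ C, p ∈ P }`. -/
def codeTranslate {K : Type*} [Field K] [NumberField K] {s t n : ℕ}
    (ρ : Fin s → (K →+* ℝ)) (σ : Fin t → (K →+* ℂ))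
    (C : Set (Fin n → NumberField.RingOfIntegers K))
    (P : Set (EuclideanSpace ℝ (Fin n × PackIdx s t))) :
    Set (EuclideanSpace ℝ (Fin n × PackIdx s t)) :=
  {z | ∃ c ∈ C, ∃ x ∈ P,
    z = tauEmbN ρ σ (fun j => algebraMap (NumberField.RingOfIntegers K) K (c j)) + x}

/-- The concatenation `τ(𝒞) + P = { Σ_{i<ℓ} τ(cᵢ) + p : cᵢ ∈ Cᵢ, p ∈ P }` of a family of codes. -/
def famTranslate {K : Type*} [Field K] [NumberField K] {s t n ℓ : ℕ}
    (ρ : Fin s → (K →+* ℝ)) (σ : Fin t → (K →+* ℂ))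
    (C : Fin ℓ → Set (Fin n → NumberField.RingOfIntegers K))
    (P : Set (EuclideanSpace ℝ (Fin n × PackIdx s t))) :
    Set (EuclideanSpace ℝ (Fin n × PackIdx s t)) :=
  {z | ∃ c : Fin ℓ → (Fin n → NumberField.RingOfIntegers K), (∀ i, c i ∈ C i) ∧ ∃ x ∈ P,
    z = (∑ i : Fin ℓ,
      tauEmbN ρ σ (fun j => algebraMap (NumberField.RingOfIntegers K) K (c i j))) + x}



section Statement4Aux

variable {K : Type*} [Field K] {s t : ℕ} (ρ : Fin s → (K →+* ℝ)) (σ : Fin t → (K →+* ℂ))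

lemma tauEmb_add' (α β : K) : tauEmb ρ σ (α + β) = tauEmb ρ σ α + tauEmb ρ σ β := by
  ext i
  rcases i with i | ⟨j, k⟩ <;>
    simp [tauEmb, EuclideanSpace.equiv, map_add, Complex.add_re, Complex.add_im, mul_add,
      PiLp.add_apply] <;> split <;> ring

lemma tauEmb_neg' (α : K) : tauEmb ρ σ (-α) = -(tauEmb ρ σ α) := by
  ext i
  rcases i with i | ⟨j, k⟩ <;>
    simp [tauEmb, EuclideanSpace.equiv, map_neg, Complex.neg_re, Complex.neg_im,
      PiLp.neg_apply] <;> split <;> ring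

lemma tauEmb_sub' (α β : K) : tauEmb ρ σ (α - β) = tauEmb ρ σ α - tauEmb ρ σ β := by
  rw [sub_eq_add_neg, tauEmb_add', tauEmb_neg', sub_eq_add_neg]

lemma tauEmb_zero' : tauEmb ρ σ (0 : K) = 0 := by
  ext i
  rcases i with i | ⟨j, k⟩ <;>
    simp [tauEmb, EuclideanSpace.equiv, PiLp.zero_apply] <;> split <;> simp

lemma tauEmb_ne_zero' [NumberField K] (hemb : IsEmbSystem ρ σ) {α : K} (hα : α ≠ 0) :
    tauEmb ρ σ α ≠ 0 := by
  intro h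
  apply hα
  have hcoord : ∀ i, tauEmb ρ σ α i = 0 := fun i => by rw [h]; rfl
  have hne : Nonempty (K →+* ℂ) := by
    rw [← Fintype.card_pos_iff, NumberField.Embeddings.card K ℂ]
    exact Module.finrank_pos
  obtain ⟨φ⟩ := hne
  obtain ⟨idx, -⟩ := hemb.2 φ
  rcases idx with i | ⟨j, k⟩
  · have h0 : ρ i α = 0 := by
      simpa [tauEmb, EuclideanSpace.equiv] using hcoord (Sum.inl i)
    exact (ρ i).injective (by simpa using h0)
  · have h0 : Real.sqrt 2 * (σ j α).re = 0 := by
      simpa [tauEmb, EuclideanSpace.equiv] using hcoord (Sum.inr (j, 0))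
    have h1 : Real.sqrt 2 * (σ j α).im = 0 := by
      simpa [tauEmb, EuclideanSpace.equiv] using hcoord (Sum.inr (j, 1))
    have hs2 : Real.sqrt 2 ≠ 0 := by positivity
    have hre : (σ j α).re = 0 := by
      rcases mul_eq_zero.mp h0 with h | h
      · exact absurd h hs2
      · exact h
    have him : (σ j α).im = 0 := by
      rcases mul_eq_zero.mp h1 with h | h
      · exact absurd h hs2
      · exact h
    have : σ j α = 0 := Complex.ext hre him
    exact (σ j).injective (by simpa using this)

lemma minDist_nonneg' {E : Type*} [MetricSpace E] (P : Set E) : 0 ≤ minDist P :=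
  Real.sInf_nonneg (by rintro d ⟨x, -, y, -, -, rfl⟩; exact dist_nonneg)

lemma minDist_bddBelow' {E : Type*} [MetricSpace E] (P : Set E) :
    BddBelow {d : ℝ | ∃ x ∈ P, ∃ y ∈ P, x ≠ y ∧ dist x y = d} :=
  ⟨0, by rintro d ⟨x, -, y, -, -, rfl⟩; exact dist_nonneg⟩

end Statement4Aux

/-- The minimum Euclidean distance of the packing `τ(C) + P` satisfies
`d_E(τ(C)+P) ≥ min(d_E(L_{i₀-1})·√d_C, d_E(P))`. -/
theorem statement4 {K : Type*} [Field K] [NumberField K] {s t m : ℕ}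
    (ρ : Fin s → (K →+* ℝ)) (σ : Fin t → (K →+* ℂ)) (hemb : IsEmbSystem ρ σ)
    (hm : m = s + 2 * t)
    (p : Ideal (NumberField.RingOfIntegers K)) (hp : p.IsPrime) (hp0 : p ≠ ⊥)
    (q : ℕ) (hq : Ideal.absNorm p = q) (i0 : ℕ) (hi0 : 1 ≤ i0) {n : ℕ}
    (P : Set (EuclideanSpace ℝ (Fin n × PackIdx s t)))
    (hP : P ⊆ prodSet n (idealImage ρ σ (p ^ i0)))
    (S : Set (NumberField.RingOfIntegers K)) (hS : IsRepSet p (i0 - 1) q S)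
    (M dC : ℕ) (C : Set (Fin n → NumberField.RingOfIntegers K)) (hC : IsCode S M dC C)
    (h0C : (fun _ => (0 : NumberField.RingOfIntegers K)) ∈ C) :
    min (minDist (idealImage ρ σ (p ^ (i0 - 1))) * Real.sqrt (dC : ℝ)) (minDist P) ≤
      minDist (codeTranslate ρ σ C P) := by
  classical
  have hdL0 : 0 ≤ minDist (idealImage ρ σ (p ^ (i0 - 1))) := minDist_nonneg' _
  -- `0` belongs to every `idealImage`
  have hzero_mem : ∀ I : Ideal (NumberField.RingOfIntegers K),
      (0 : EuclideanSpace ℝ (PackIdx s t)) ∈ idealImage ρ σ I := by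
    intro I
    exact ⟨0, I.zero_mem, by simp [tauEmb_zero']⟩
  -- key pointwise bound
  have hkey : ∀ z ∈ codeTranslate ρ σ C P, ∀ z' ∈ codeTranslate ρ σ C P, z ≠ z' →
      min (minDist (idealImage ρ σ (p ^ (i0 - 1))) * Real.sqrt (dC : ℝ)) (minDist P)
        ≤ dist z z' := by
    rintro z ⟨c, hc, x, hx, rfl⟩ z' ⟨c', hc', x', hx', rfl⟩ hne
    by_cases hcc : c = c'
    · subst hcc
      have hxx : x ≠ x' := fun h => hne (by rw [h])
      have hdd : dist (tauEmbN ρ σ (fun j => algebraMap (NumberField.RingOfIntegers K) K (c j)) + x)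
          (tauEmbN ρ σ (fun j => algebraMap (NumberField.RingOfIntegers K) K (c j)) + x')
          = dist x x' := dist_add_left _ _ _
      rw [hdd]
      exact le_trans (min_le_right _ _)
        (csInf_le (minDist_bddBelow' P) ⟨x, hx, x', hx', hxx, rfl⟩)
    · refine le_trans (min_le_left _ _) ?_
      choose a ha hfa using fun j => hP hx j
      choose a' ha' hfa' using fun j => hP hx' j
      have hx_coord : ∀ j i,
          tauEmb ρ σ (algebraMap (NumberField.RingOfIntegers K) K (a j)) i = x (j, i) :=
        fun j i => by
          have := congrArg (fun v => v i) (hfa j); simpa [EuclideanSpace.equiv] using this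
      have hx'_coord : ∀ j i,
          tauEmb ρ σ (algebraMap (NumberField.RingOfIntegers K) K (a' j)) i = x' (j, i) :=
        fun j i => by
          have := congrArg (fun v => v i) (hfa' j); simpa [EuclideanSpace.equiv] using this
      set β : Fin n → NumberField.RingOfIntegers K :=
        fun j => (c j + a j) - (c' j + a' j) with hβ
      set z1 := tauEmbN ρ σ (fun j => algebraMap (NumberField.RingOfIntegers K) K (c j)) + x
        with hz1
      set z2 := tauEmbN ρ σ (fun j => algebraMap (NumberField.RingOfIntegers K) K (c' j)) + x'
        with hz2
      have hz : ∀ j i, z1 (j, i) - z2 (j, i)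
          = tauEmb ρ σ (algebraMap (NumberField.RingOfIntegers K) K (β j)) i := by
        intro j i
        have e : tauEmb ρ σ (algebraMap (NumberField.RingOfIntegers K) K (β j))
            = (tauEmb ρ σ (algebraMap (NumberField.RingOfIntegers K) K (c j))
                + tauEmb ρ σ (algebraMap (NumberField.RingOfIntegers K) K (a j)))
              - (tauEmb ρ σ (algebraMap (NumberField.RingOfIntegers K) K (c' j))
                + tauEmb ρ σ (algebraMap (NumberField.RingOfIntegers K) K (a' j))) := by
          rw [hβ]
          simp only [map_sub, map_add, tauEmb_sub', tauEmb_add']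
        rw [e]
        simp only [hz1, hz2, PiLp.sub_apply, PiLp.add_apply]
        rw [hx_coord j i, hx'_coord j i]
        have t1 : tauEmbN ρ σ (fun j => algebraMap (NumberField.RingOfIntegers K) K (c j)) (j, i)
            = tauEmb ρ σ (algebraMap (NumberField.RingOfIntegers K) K (c j)) i := rfl
        have t2 : tauEmbN ρ σ (fun j => algebraMap (NumberField.RingOfIntegers K) K (c' j)) (j, i)
            = tauEmb ρ σ (algebraMap (NumberField.RingOfIntegers K) K (c' j)) i := rfl
        rw [t1, t2]
      -- the set of coordinates where the codewords differ
      set D : Finset (Fin n) := Finset.univ.filter (fun j => c j ≠ c' j) with hD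
      have hstep : (p ^ i0 : Ideal (NumberField.RingOfIntegers K)) ≤ p ^ (i0 - 1) :=
        Ideal.pow_le_pow_right (Nat.sub_le i0 1)
      have hi0' : i0 - 1 + 1 = i0 := Nat.sub_add_cancel hi0
      -- per-coordinate-block lower bound
      have hblock : ∀ j ∈ D, minDist (idealImage ρ σ (p ^ (i0 - 1))) ^ 2
          ≤ ∑ i : PackIdx s t, dist (z1 (j, i)) (z2 (j, i)) ^ 2 := by
        intro j hj
        have hccj : c j ≠ c' j := by simpa [hD] using hj
        have hcS : c j ∈ S := hC.1 c hc j
        have hc'S : c' j ∈ S := hC.1 c' hc' j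
        have hβmem : β j ∈ (p ^ (i0 - 1) : Ideal (NumberField.RingOfIntegers K)) := by
          exact sub_mem (add_mem (hS.1 hcS) (hstep (ha j)))
            (add_mem (hS.1 hc'S) (hstep (ha' j)))
        have hβne : β j ≠ 0 := by
          intro h
          have hdiff : c j - c' j = a' j - a j := by
            have := h
            rw [hβ] at this
            simp only at this
            linear_combination this
          have hmem : c j - c' j ∈ (p ^ (i0 - 1 + 1) : Ideal (NumberField.RingOfIntegers K)) := by
            rw [hi0', hdiff]
            exact sub_mem (ha' j) (ha j)
          exact hS.2.2.2.1 (c j) hcS (c' j) hc'S hccj hmem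
        have hβK : algebraMap (NumberField.RingOfIntegers K) K (β j) ≠ 0 := fun h =>
          hβne ((map_eq_zero_iff _ (IsFractionRing.injective
            (NumberField.RingOfIntegers K) K)).mp h)
        have hτne : tauEmb ρ σ (algebraMap (NumberField.RingOfIntegers K) K (β j)) ≠ 0 :=
          tauEmb_ne_zero' ρ σ hemb hβK
        have hτmem : tauEmb ρ σ (algebraMap (NumberField.RingOfIntegers K) K (β j))
            ∈ idealImage ρ σ (p ^ (i0 - 1)) := ⟨β j, hβmem, rfl⟩
        have hdistle : minDist (idealImage ρ σ (p ^ (i0 - 1)))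
            ≤ ‖tauEmb ρ σ (algebraMap (NumberField.RingOfIntegers K) K (β j))‖ := by
          have := csInf_le (minDist_bddBelow' (idealImage ρ σ (p ^ (i0 - 1))))
            ⟨_, hτmem, 0, hzero_mem _, hτne, rfl⟩
          simpa [minDist, dist_zero_right] using this
        have hsumeq : ∑ i : PackIdx s t, dist (z1 (j, i)) (z2 (j, i)) ^ 2
            = ‖tauEmb ρ σ (algebraMap (NumberField.RingOfIntegers K) K (β j))‖ ^ 2 := by
          rw [EuclideanSpace.norm_eq, Real.sq_sqrt (by positivity)]
          refine Finset.sum_congr rfl fun i _ => ?_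
          rw [Real.dist_eq, sq_abs, hz j i, Real.norm_eq_abs, sq_abs]
        rw [hsumeq]
        exact pow_le_pow_left₀ hdL0 hdistle 2
      have hcard : dC ≤ D.card := by
        have h1 : codeMinDist C ≤ hDist c c' := Nat.sInf_le ⟨c, hc, c', hc', hcc, rfl⟩
        have h2 : hDist c c' = D.card := by
          rw [hDist, Nat.card_eq_fintype_card, hD]
          exact Fintype.card_subtype _
        rw [hC.2.2, h2] at h1
        exact h1
      have hgoal : dist z1 z2 = Real.sqrt (∑ pr : Fin n × PackIdx s t,
          dist (z1 pr) (z2 pr) ^ 2) := EuclideanSpace.dist_eq z1 z2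
      rw [hgoal]
      have hsum : (dC : ℝ) * minDist (idealImage ρ σ (p ^ (i0 - 1))) ^ 2
          ≤ ∑ pr : Fin n × PackIdx s t, dist (z1 pr) (z2 pr) ^ 2 := by
        rw [Fintype.sum_prod_type]
        have hDs : ∑ j ∈ D, (∑ i : PackIdx s t, dist (z1 (j, i)) (z2 (j, i)) ^ 2)
            ≤ ∑ j : Fin n, ∑ i : PackIdx s t, dist (z1 (j, i)) (z2 (j, i)) ^ 2 :=
          Finset.sum_le_sum_of_subset_of_nonneg (Finset.subset_univ _)
            (fun j _ _ => by positivity)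
        have hlb := Finset.card_nsmul_le_sum D
          (fun j => ∑ i : PackIdx s t, dist (z1 (j, i)) (z2 (j, i)) ^ 2)
          (minDist (idealImage ρ σ (p ^ (i0 - 1))) ^ 2) hblock
        rw [nsmul_eq_mul] at hlb
        calc (dC : ℝ) * minDist (idealImage ρ σ (p ^ (i0 - 1))) ^ 2
            ≤ (D.card : ℝ) * minDist (idealImage ρ σ (p ^ (i0 - 1))) ^ 2 := by
              apply mul_le_mul_of_nonneg_right _ (sq_nonneg _)
              exact_mod_cast hcard
          _ ≤ ∑ j ∈ D, (∑ i : PackIdx s t, dist (z1 (j, i)) (z2 (j, i)) ^ 2) := hlb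
          _ ≤ _ := hDs
      rw [Real.le_sqrt (by positivity) (by positivity), mul_pow,
        Real.sq_sqrt (Nat.cast_nonneg _)]
      calc minDist (idealImage ρ σ (p ^ (i0 - 1))) ^ 2 * (dC : ℝ)
          = (dC : ℝ) * minDist (idealImage ρ σ (p ^ (i0 - 1))) ^ 2 := by ring
        _ ≤ _ := hsum
  rcases Set.eq_empty_or_nonempty
      {d : ℝ | ∃ x ∈ P, ∃ y ∈ P, x ≠ y ∧ dist x y = d} with hPd | hPd
  · have hP0 : minDist P = 0 := by rw [minDist, hPd, Real.sInf_empty]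
    calc min (minDist (idealImage ρ σ (p ^ (i0 - 1))) * Real.sqrt (dC : ℝ)) (minDist P)
        ≤ minDist P := min_le_right _ _
      _ = 0 := hP0
      _ ≤ minDist (codeTranslate ρ σ C P) := minDist_nonneg' _
  · obtain ⟨d, x, hx, y, hy, hxy, rfl⟩ := hPd
    set c0 : Fin n → NumberField.RingOfIntegers K := fun _ => 0 with hc0
    set w := tauEmbN ρ σ (fun j => algebraMap (NumberField.RingOfIntegers K) K (c0 j)) with hw
    have hzx : w + x ∈ codeTranslate ρ σ C P := ⟨c0, h0C, x, hx, rfl⟩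
    have hzy : w + y ∈ codeTranslate ρ σ C P := ⟨c0, h0C, y, hy, rfl⟩
    have hne : w + x ≠ w + y := fun h => hxy (add_left_cancel h)
    show _ ≤ sInf {d : ℝ | ∃ u ∈ codeTranslate ρ σ C P, ∃ v ∈ codeTranslate ρ σ C P,
      u ≠ v ∧ dist u v = d}
    refine le_csInf ?_ ?_
    · exact ⟨dist (w + x) (w + y), w + x, hzx, w + y, hzy, hne, rfl⟩
    · rintro b ⟨u, hu, v, hv, huv, rfl⟩
      exact hkey u hu v hv huv

end
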